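/- arXiv:1904.02394 — 4 statements merged into one kernel-verified Lean document; each statement's English description precedes it below -/
import Mathlib

section
/- Fix ε > 0 and f₀ ∈ L¹₂(ℝ³) with 0 ≤ f₀ ≤ 1/ε, and let f ∈ 𝒴_ε(f₀). Then 0 ≤ 𝒮_ε(f), and there exists a constant C(f₀) > 0 depending only on the energy E(f₀) such that for every R > 1: 𝒮_ε(f) ≤ 80(|log ε| + log R) ∫_{|v|≤R} f(v)(1−ε f(v)) dv + C(f₀)/R + |log ε|·E(f₀)/R². -/
open MeasureTheory Real

noncomputable section

abbrev E3 := EuclideanSpace ℝ (Fin 3)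

/-- Fermi–Dirac entropy `𝒮_ε(f) = -(1/ε)∫ [εf log(εf) + (1-εf) log(1-εf)]`. -/
def fdEnt (ε : ℝ) (f : E3 → ℝ) : ℝ :=
  -ε⁻¹ * ∫ v, (ε * f v * log (ε * f v) + (1 - ε * f v) * log (1 - ε * f v))

/-- Mass `M(f) = ∫ f`. -/
def mass (f : E3 → ℝ) : ℝ := ∫ v, f v

/-- Energy `E(f) = ∫ f |v|²`. -/
def energy (f : E3 → ℝ) : ℝ := ∫ v, f v * ‖v‖ ^ 2

/-- The class `𝒴_ε(f₀)` : `f ∈ L¹₂`, `0 ≤ f ≤ 1/ε`, same mass and energy as `f₀`,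
and `𝒮_ε(f) ≥ 𝒮_ε(f₀)`. -/
def memY (ε : ℝ) (f₀ f : E3 → ℝ) : Prop :=
  Measurable f ∧ (∀ v, 0 ≤ f v) ∧ (∀ v, f v ≤ ε⁻¹) ∧
    Integrable (fun v => f v * (1 + ‖v‖ ^ 2)) ∧
    mass f = mass f₀ ∧ energy f = energy f₀ ∧ fdEnt ε f₀ ≤ fdEnt ε f

/-! ### Auxiliary pointwise lemmas -/

/-- `t * (-log t) ≤ 1 - t` for `t ∈ [0,1]` (Lean convention `log 0 = 0`). -/
lemma aux_tlog {t : ℝ} (h0 : 0 ≤ t) (h1 : t ≤ 1) : t * (-log t) ≤ 1 - t := by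
  rcases h0.lt_or_eq with h | h
  · have := Real.log_le_sub_one_of_pos (inv_pos.mpr h)
    rw [Real.log_inv] at this
    have h2 : t * (-log t) ≤ t * (t⁻¹ - 1) := mul_le_mul_of_nonneg_left this h0
    calc t * (-log t) ≤ t * (t⁻¹ - 1) := h2
      _ = 1 - t := by field_simp
  · rw [← h]; norm_num

lemma phi_nonpos {x : ℝ} (h0 : 0 ≤ x) (h1 : x ≤ 1) :
    x * log x + (1 - x) * log (1 - x) ≤ 0 := by
  have l1 : log x ≤ 0 := Real.log_nonpos h0 h1
  have l2 : log (1 - x) ≤ 0 := Real.log_nonpos (by linarith) (by linarith)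
  nlinarith [mul_nonneg h0 (neg_nonneg.2 l1),
    mul_nonneg (by linarith : (0:ℝ) ≤ 1 - x) (neg_nonneg.2 l2)]

lemma neg_phi_le_linear {x : ℝ} (h0 : 0 ≤ x) (h1 : x ≤ 1) :
    -(x * log x + (1 - x) * log (1 - x)) ≤ x * (1 - log x) := by
  have := aux_tlog (t := 1 - x) (by linarith) (by linarith)
  nlinarith [this]

lemma L3a {x : ℝ} (h0 : 0 < x) (h1 : x < 1) :
    x * (-log x) ≤ 2 * (x * (1 - x)) * (1 - log x) := by
  rcases le_or_gt x (1/2) with hx | hx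
  · have hL : 0 ≤ -log x := by
      have := Real.log_nonpos h0.le h1.le; linarith
    nlinarith [mul_nonneg (mul_nonneg h0.le (by linarith : (0:ℝ) ≤ 1 - 2*x)) hL,
      mul_nonneg h0.le hL]
  · have h2 : x * (-log x) ≤ 1 - x := aux_tlog h0.le h1.le
    have hL : 0 ≤ -log x := by
      have := Real.log_nonpos h0.le h1.le; linarith
    nlinarith

lemma neg_phi_le_quad {x : ℝ} (h0 : 0 ≤ x) (h1 : x ≤ 1) :
    -(x * log x + (1 - x) * log (1 - x)) ≤ 4 * (x * (1 - x)) * (1 - log (x * (1 - x))) := by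
  rcases h0.lt_or_eq with h0' | h
  swap
  · rw [← h]; norm_num
  rcases h1.lt_or_eq with h1' | h
  swap
  · rw [h]; norm_num
  have hy : 0 < x * (1 - x) := by nlinarith
  have e1 : x * (-log x) ≤ 2 * (x * (1 - x)) * (1 - log x) := L3a h0' h1'
  have e2 : (1 - x) * (-log (1 - x)) ≤ 2 * ((1 - x) * (1 - (1 - x))) * (1 - log (1 - x)) :=
    L3a (by linarith) (by linarith)
  have m1 : log (x * (1 - x)) ≤ log x := Real.log_le_log hy (by nlinarith)
  have m2 : log (x * (1 - x)) ≤ log (1 - x) := Real.log_le_log hy (by nlinarith)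
  nlinarith [hy, mul_pos h0' (sub_pos.mpr h1')]

lemma L4 {g R : ℝ} (hg : 0 ≤ g) (hR : 1 < R) :
    g * max (-log g) 0 ≤ 8 * g * log R + 2 / R ^ 4 := by
  have hR0 : 0 < R := by linarith
  have hlR : 0 < log R := Real.log_pos hR
  have hR4 : (0:ℝ) < R ^ 4 := by positivity
  have hR8 : (0:ℝ) < R ^ 8 := by positivity
  rcases le_or_gt ((R ^ 8)⁻¹) g with hg1 | hg1
  · have hgpos : 0 < g := lt_of_lt_of_le (by positivity) hg1
    have hm : -log g ≤ 8 * log R := by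
      have := Real.log_le_log (by positivity) hg1
      rw [Real.log_inv, Real.log_pow] at this
      push_cast at this
      linarith
    have hmx : max (-log g) 0 ≤ 8 * log R := max_le hm (by positivity)
    have h2 : g * max (-log g) 0 ≤ g * (8 * log R) := mul_le_mul_of_nonneg_left hmx hg
    have h3 : (0:ℝ) ≤ 2 / R ^ 4 := by positivity
    nlinarith
  · rcases hg.lt_or_eq with hgpos | h
    swap
    · rw [← h]; simp; positivity
    have key : g * (-log g) ≤ 2 * Real.sqrt g := by
      have hs : 0 < Real.sqrt g := Real.sqrt_pos.mpr hgpos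
      have e : -log g = 2 * (-log (Real.sqrt g)) := by
        rw [Real.log_sqrt hg]; ring
      rw [e]
      have hls : -log (Real.sqrt g) ≤ (Real.sqrt g)⁻¹ := by
        have := Real.log_le_sub_one_of_pos (inv_pos.mpr hs)
        rw [Real.log_inv] at this
        linarith [this]
      have h5 : g * (2 * (-log (Real.sqrt g))) ≤ g * (2 * (Real.sqrt g)⁻¹) :=
        mul_le_mul_of_nonneg_left (by linarith) hg
      calc g * (2 * (-log √g)) ≤ g * (2 * (√g)⁻¹) := h5
        _ = 2 * (g / √g) := by ring
        _ = 2 * √g := by rw [Real.div_sqrt]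
    have hsg : Real.sqrt g ≤ (R ^ 4)⁻¹ := by
      have hgle : g ≤ ((R ^ 4)⁻¹) ^ 2 := by
        calc g ≤ (R ^ 8)⁻¹ := hg1.le
          _ = ((R ^ 4) ^ 2)⁻¹ := by ring_nf
          _ = ((R ^ 4)⁻¹) ^ 2 := by rw [inv_pow]
      calc Real.sqrt g ≤ Real.sqrt (((R ^ 4)⁻¹) ^ 2) := Real.sqrt_le_sqrt hgle
        _ = (R ^ 4)⁻¹ := Real.sqrt_sq (by positivity)
    have hmax : max (-log g) 0 = -log g := by
      apply max_eq_left
      have h18 : (1:ℝ) ≤ R ^ 8 := one_le_pow₀ hR.le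
      have : log g < 0 := Real.log_neg hgpos (lt_of_lt_of_le hg1 (inv_le_one_of_one_le₀ h18))
      linarith
    rw [hmax]
    have hfin : g * (-log g) ≤ 2 / R ^ 4 := by
      calc g * (-log g) ≤ 2 * Real.sqrt g := key
        _ ≤ 2 * (R ^ 4)⁻¹ := by linarith
        _ = 2 / R ^ 4 := by rw [div_eq_mul_inv]
    nlinarith [mul_nonneg (mul_nonneg (by norm_num : (0:ℝ) ≤ 8) hg) hlR.le]

lemma L5 {f r : ℝ} (hf : 0 ≤ f) (hr : 0 ≤ r) :
    f * max (-log f) 0 ≤ f * r + Real.exp (-r) := by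
  rcases hf.lt_or_eq with hfpos | h
  swap
  · rw [← h]; simp; positivity
  rcases le_or_gt (Real.exp (-r)) f with h1 | h1
  · have hl : -log f ≤ r := by
      have := Real.log_le_log (Real.exp_pos _) h1
      rw [Real.log_exp] at this; linarith
    have hmx : max (-log f) 0 ≤ r := max_le hl hr
    have := mul_le_mul_of_nonneg_left hmx hf
    linarith [Real.exp_pos (-r), this]
  · have hf1 : f < 1 := lt_of_lt_of_le h1 (Real.exp_le_one_iff.mpr (by linarith))
    have hmax : max (-log f) 0 = -log f := max_eq_left (by
      have := Real.log_neg hfpos hf1; linarith)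
    rw [hmax]
    set t := Real.exp (-r) / f with ht
    have htpos : 0 < t := div_pos (Real.exp_pos _) hfpos
    have hlt : log t ≤ t := le_trans (Real.log_le_sub_one_of_pos htpos) (by linarith)
    have hlog : log t = -r - log f := by
      rw [ht, Real.log_div (ne_of_gt (Real.exp_pos _)) (ne_of_gt hfpos), Real.log_exp]
    have h2 : f * log t ≤ f * t := mul_le_mul_of_nonneg_left hlt hf
    have h3 : f * t = Real.exp (-r) := by
      rw [ht]; field_simp
    rw [hlog] at h2
    nlinarith

/-! ### Auxiliary integration lemmas on `E3` -/

lemma exp_poly_bound {r : ℝ} (hr : 0 ≤ r) : (1 + r) ^ 5 * Real.exp (-r) ≤ 3125 := by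
  have h1 : (1 + r / 5) ^ 5 ≤ Real.exp r := by
    have := Real.add_one_le_exp (r / 5)
    calc (1 + r / 5) ^ 5 ≤ (Real.exp (r / 5)) ^ 5 := by
          apply pow_le_pow_left₀ (by linarith) (by linarith)
      _ = Real.exp ((5:ℕ) * (r / 5)) := (Real.exp_nat_mul _ 5).symm
      _ = Real.exp r := by congr 1; push_cast; ring
  have h2 : (1 + r) ^ 5 ≤ 3125 * (1 + r / 5) ^ 5 := by
    have h : (1 + r) ^ 5 ≤ (5 * (1 + r / 5)) ^ 5 := by
      apply pow_le_pow_left₀ (by linarith) (by linarith)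
    calc (1 + r) ^ 5 ≤ (5 * (1 + r / 5)) ^ 5 := h
      _ = 3125 * (1 + r / 5) ^ 5 := by ring
  have hexp : (0:ℝ) < Real.exp (-r) := Real.exp_pos _
  calc (1 + r) ^ 5 * Real.exp (-r) ≤ 3125 * (1 + r / 5) ^ 5 * Real.exp (-r) := by
        apply mul_le_mul_of_nonneg_right h2 hexp.le
    _ ≤ 3125 * Real.exp r * Real.exp (-r) := by
        have := mul_le_mul_of_nonneg_left h1 (by norm_num : (0:ℝ) ≤ 3125)
        apply mul_le_mul_of_nonneg_right this hexp.le
    _ = 3125 := by rw [mul_assoc, ← Real.exp_add]; simp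

lemma integrable_weight : Integrable (fun v : E3 => (1 + ‖v‖) * Real.exp (-‖v‖)) := by
  have hbase : Integrable (fun v : E3 => (3125:ℝ) * (1 + ‖v‖) ^ (-(4:ℝ))) := by
    apply Integrable.const_mul
    apply integrable_one_add_norm (μ := (volume : Measure E3))
    rw [finrank_euclideanSpace_fin]; norm_num
  apply hbase.mono'
  · apply Continuous.aestronglyMeasurable; fun_prop
  · filter_upwards with v
    have h0 : (0:ℝ) < 1 + ‖v‖ := by positivity
    have key : (1 + ‖v‖) * Real.exp (-‖v‖) ≤ 3125 * (1 + ‖v‖) ^ (-(4:ℝ)) := by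
      rw [Real.rpow_neg h0.le, show (4:ℝ) = ((4:ℕ):ℝ) by norm_num, Real.rpow_natCast]
      have h4 : (0:ℝ) < (1 + ‖v‖) ^ (4:ℕ) := by positivity
      have hmain : (1 + ‖v‖) * Real.exp (-‖v‖) * (1 + ‖v‖) ^ (4:ℕ) ≤ 3125 := by
        calc (1 + ‖v‖) * Real.exp (-‖v‖) * (1 + ‖v‖) ^ (4:ℕ)
            = (1 + ‖v‖) ^ 5 * Real.exp (-‖v‖) := by ring
          _ ≤ 3125 := exp_poly_bound (norm_nonneg v)
      rw [← le_div_iff₀ h4] at hmain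
      rwa [div_eq_mul_inv] at hmain
    rw [Real.norm_eq_abs, abs_of_nonneg (by positivity)]
    exact key

lemma gamma52 : Real.Gamma ((3:ℝ)/2 + 1) = 3 * Real.sqrt π / 4 := by
  rw [Real.Gamma_add_one (by norm_num)]
  rw [show (3:ℝ)/2 = 1/2 + 1 by norm_num, Real.Gamma_add_one (by norm_num),
    Real.Gamma_one_half_eq]
  ring

lemma ball_const : Real.sqrt π ^ 3 / Real.Gamma (((3:ℕ):ℝ)/2 + 1) = 4 * π / 3 := by
  have hs : Real.sqrt π * Real.sqrt π = π := Real.mul_self_sqrt pi_pos.le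
  have hsne : Real.sqrt π ≠ 0 := by positivity
  have h3 : Real.sqrt π ^ 3 = π * Real.sqrt π := by
    rw [pow_succ, Real.sq_sqrt pi_pos.le]
  push_cast
  rw [gamma52, h3]
  field_simp

lemma volE3_ball : (volume (Metric.ball (0:E3) 1)).toReal = 4 * π / 3 := by
  rw [EuclideanSpace.volume_ball]
  simp only [Fintype.card_fin]
  rw [ball_const]
  simp [ENNReal.toReal_mul, ENNReal.toReal_ofReal (by positivity : (0:ℝ) ≤ 4*π/3)]

lemma volE3_closedBall {R : ℝ} (hR : 0 ≤ R) :
    (volume (Metric.closedBall (0:E3) R)).toReal = 4 * π / 3 * R ^ 3 := by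
  rw [EuclideanSpace.volume_closedBall]
  simp only [Fintype.card_fin]
  rw [ball_const]
  rw [← ENNReal.ofReal_pow hR, ← ENNReal.ofReal_mul (by positivity)]
  rw [ENNReal.toReal_ofReal (by positivity)]
  ring

lemma W_val : (∫ v : E3, ‖v‖ * Real.exp (-‖v‖)) = 24 * π := by
  have h := MeasureTheory.integral_fun_norm_addHaar (volume : Measure E3)
    (fun r : ℝ => r * Real.exp (-r))
  rw [finrank_euclideanSpace_fin] at h
  rw [h, measureReal_def, volE3_ball]
  have hint : (∫ y in Set.Ioi (0:ℝ), y ^ (3 - 1) • (y * Real.exp (-y))) = 6 := by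
    have hγ : Real.Gamma 4 = ∫ x in Set.Ioi (0:ℝ), Real.exp (-x) * x ^ ((4:ℝ) - 1) :=
      Real.Gamma_eq_integral (by norm_num)
    have hγ6 : Real.Gamma 4 = 6 := by
      rw [show (4:ℝ) = ((3:ℕ):ℝ) + 1 by norm_num, Real.Gamma_nat_eq_factorial]
      norm_num [Nat.factorial]
    have hcong : (∫ y in Set.Ioi (0:ℝ), y ^ (3 - 1) • (y * Real.exp (-y)))
        = ∫ x in Set.Ioi (0:ℝ), Real.exp (-x) * x ^ ((4:ℝ) - 1) := by
      apply setIntegral_congr_fun measurableSet_Ioi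
      intro y hy
      have hy0 : (0:ℝ) < y := hy
      simp only [smul_eq_mul]
      rw [show (4:ℝ) - 1 = ((3:ℕ):ℝ) by norm_num, Real.rpow_natCast]
      ring
    rw [hcong, ← hγ, hγ6]
  rw [hint]
  simp only [nsmul_eq_mul, smul_eq_mul]
  ring

lemma integrable_exp_norm : Integrable (fun v : E3 => Real.exp (-‖v‖)) := by
  apply integrable_weight.mono'
  · apply Continuous.aestronglyMeasurable; fun_prop
  · filter_upwards with v
    rw [Real.norm_eq_abs, abs_of_pos (Real.exp_pos _)]
    nlinarith [Real.exp_pos (-‖v‖), norm_nonneg v]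

lemma integrable_norm_exp_norm : Integrable (fun v : E3 => ‖v‖ * Real.exp (-‖v‖)) := by
  apply integrable_weight.mono'
  · apply Continuous.aestronglyMeasurable; fun_prop
  · filter_upwards with v
    rw [Real.norm_eq_abs, abs_of_nonneg (by positivity)]
    nlinarith [Real.exp_pos (-‖v‖), norm_nonneg v]

/-! ### The main theorem -/

set_option maxHeartbeats 8000000

/-- Upper bound on the Fermi–Dirac entropy: `0 ≤ 𝒮_ε(f)` and, for every `R > 1`,
`𝒮_ε(f) ≤ 80(|log ε| + log R) ∫_{|v|≤R} f(1-εf) + C(f₀)/R + |log ε| E(f₀)/R²`,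
with `C(f₀) > 0` depending only on the energy `E(f₀)`. -/
theorem stmt2 :
    ∃ C : ℝ → ℝ, (∀ E, 0 < C E) ∧
      ∀ (ε : ℝ), 0 < ε → ∀ f₀ f : E3 → ℝ,
        Measurable f₀ → (∀ v, 0 ≤ f₀ v) → (∀ v, f₀ v ≤ ε⁻¹) →
        Integrable (fun v => f₀ v * (1 + ‖v‖ ^ 2)) →
        memY ε f₀ f →
        0 ≤ fdEnt ε f ∧
        ∀ R : ℝ, 1 < R →
          fdEnt ε f ≤
            80 * (|log ε| + log R) *
                (∫ v in Metric.closedBall (0 : E3) R, f v * (1 - ε * f v)) +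
              C (energy f₀) / R + |log ε| * energy f₀ / R ^ 2 := by
  refine ⟨fun E => 2 * |E| + 2000, fun E => by positivity, ?_⟩
  intro ε hε f₀ f hm₀ h0₀ h1₀ hint₀ hY
  obtain ⟨hfm, hf0, hf1, hfint, hmass, hener, hent⟩ := hY
  have hεinv : (0:ℝ) < ε⁻¹ := inv_pos.mpr hε
  have hx0 : ∀ v, 0 ≤ ε * f v := fun v => mul_nonneg hε.le (hf0 v)
  have hx1 : ∀ v, ε * f v ≤ 1 := fun v => by
    have h := mul_le_mul_of_nonneg_left (hf1 v) hε.le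
    rwa [mul_inv_cancel₀ (ne_of_gt hε)] at h
  set φ : E3 → ℝ := fun v =>
    ε * f v * log (ε * f v) + (1 - ε * f v) * log (1 - ε * f v) with hφ
  set h : E3 → ℝ := fun v => -φ v with hh
  have hφ_nonpos : ∀ v, φ v ≤ 0 := fun v => phi_nonpos (hx0 v) (hx1 v)
  have hh0 : ∀ v, 0 ≤ h v := fun v => by
    rw [hh]; simpa using neg_nonneg.mpr (hφ_nonpos v)
  have hfd : fdEnt ε f = ε⁻¹ * ∫ v, h v := by
    have e1 : (fun v => ε * f v * log (ε * f v) + (1 - ε * f v) * log (1 - ε * f v))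
        = fun v => -h v := by funext v; simp [hh, hφ]
    unfold fdEnt
    rw [e1, integral_neg]; ring
  -- Part 1 : 0 ≤ fdEnt ε f
  have hS0 : 0 ≤ fdEnt ε f := by
    rw [hfd]
    exact mul_nonneg hεinv.le (integral_nonneg hh0)
  refine ⟨hS0, ?_⟩
  intro R hR
  have hR0 : (0:ℝ) < R := by linarith
  have hlR : 0 < log R := Real.log_pos hR
  have habsε : (0:ℝ) ≤ |log ε| := abs_nonneg _
  -- measurability and integrability machinery
  have hhmeas : Measurable h := by
    rw [hh, hφ]
    apply Measurable.neg
    exact ((measurable_const.mul hfm).mul (measurable_const.mul hfm).log).add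
      ((measurable_const.sub (measurable_const.mul hfm)).mul
        (measurable_const.sub (measurable_const.mul hfm)).log)
  have hfint1 : Integrable f := by
    apply hfint.mono' hfm.aestronglyMeasurable
    filter_upwards with v
    rw [Real.norm_eq_abs, abs_of_nonneg (hf0 v)]
    nlinarith [hf0 v, sq_nonneg ‖v‖, mul_nonneg (hf0 v) (sq_nonneg ‖v‖)]
  have hfknorm : Integrable (fun v => f v * ‖v‖) := by
    apply hfint.mono' (hfm.mul measurable_norm).aestronglyMeasurable
    filter_upwards with v
    rw [Real.norm_eq_abs]; simp only [Pi.mul_apply]; rw [abs_of_nonneg (mul_nonneg (hf0 v) (norm_nonneg v))]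
    nlinarith [hf0 v, sq_nonneg (‖v‖ - 1), mul_nonneg (hf0 v) (sq_nonneg (‖v‖ - 1))]
  have hfksq : Integrable (fun v => f v * ‖v‖ ^ 2) := by
    apply hfint.mono' (hfm.mul (measurable_norm.pow measurable_const)).aestronglyMeasurable
    filter_upwards with v
    rw [Real.norm_eq_abs]; simp only [Pi.mul_apply]; rw [abs_of_nonneg (mul_nonneg (hf0 v) (sq_nonneg _))]
    nlinarith [hf0 v]
  -- global pointwise (tail-type) bound
  have PB : ∀ v, ε⁻¹ * h v ≤ f v * (1 + |log ε|) + (f v * ‖v‖ + Real.exp (-‖v‖)) := by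
    intro v
    have hlin : h v ≤ (ε * f v) * (1 - log (ε * f v)) := by
      simp only [hh, hφ]
      exact neg_phi_le_linear (hx0 v) (hx1 v)
    rcases (hf0 v).lt_or_eq with hfv | hfv
    · have hlog : log (ε * f v) = log ε + log (f v) := Real.log_mul (ne_of_gt hε) (ne_of_gt hfv)
      have step : ε⁻¹ * h v ≤ f v * (1 - log ε - log (f v)) := by
        have h2 := mul_le_mul_of_nonneg_left hlin hεinv.le
        calc ε⁻¹ * h v ≤ ε⁻¹ * ((ε * f v) * (1 - log (ε * f v))) := h2
          _ = f v * (1 - log ε - log (f v)) := by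
              rw [hlog]; field_simp; ring
      have l5 := L5 (hf0 v) (norm_nonneg v)
      have a1 : f v * (-log ε) ≤ f v * |log ε| :=
        mul_le_mul_of_nonneg_left (neg_le_abs _) (hf0 v)
      have a2 : f v * (-log (f v)) ≤ f v * max (-log (f v)) 0 :=
        mul_le_mul_of_nonneg_left (le_max_left _ _) (hf0 v)
      nlinarith [l5, a1, a2, step]
    · have hz : ε * f v = 0 := by rw [← hfv]; ring
      rw [hz] at hlin
      simp at hlin
      have h6 : ε⁻¹ * h v ≤ 0 := mul_nonpos_of_nonneg_of_nonpos hεinv.le hlin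
      have he := Real.exp_pos (-‖v‖)
      have h7 : f v * (1 + |log ε|) = 0 := by rw [← hfv]; ring
      have h8 : f v * ‖v‖ = 0 := by rw [← hfv]; ring
      linarith
  have hΨint : Integrable (fun v => f v * (1 + |log ε|) + (f v * ‖v‖ + Real.exp (-‖v‖))) :=
    (hfint1.mul_const _).add (hfknorm.add integrable_exp_norm)
  have hhint : Integrable h := by
    apply (hΨint.const_mul ε).mono' hhmeas.aestronglyMeasurable
    filter_upwards with v
    rw [Real.norm_eq_abs, abs_of_nonneg (hh0 v)]
    have h2 := mul_le_mul_of_nonneg_left (PB v) hε.le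
    calc h v = ε * (ε⁻¹ * h v) := by field_simp
      _ ≤ ε * (f v * (1 + |log ε|) + (f v * ‖v‖ + Real.exp (-‖v‖))) := h2
  -- the function H = ε⁻¹ h
  set H : E3 → ℝ := fun v => ε⁻¹ * h v with hH
  have hHint : Integrable H := hhint.const_mul ε⁻¹
  have hH0 : ∀ v, 0 ≤ H v := fun v => mul_nonneg hεinv.le (hh0 v)
  have hfdH : fdEnt ε f = ∫ v, H v := by
    rw [hfd, hH, MeasureTheory.integral_const_mul]
  set A : Set E3 := Metric.closedBall (0:E3) R with hA
  have hAmeas : MeasurableSet A := measurableSet_closedBall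
  have hsplit : (∫ v, H v) = (∫ v in A, H v) + ∫ v in Aᶜ, H v :=
    (integral_add_compl hAmeas hHint).symm
  -- the function g
  set g : E3 → ℝ := fun v => f v * (1 - ε * f v) with hg
  have hg0 : ∀ v, 0 ≤ g v := fun v => mul_nonneg (hf0 v) (by linarith [hx1 v])
  have hgm : Measurable g := hfm.mul (measurable_const.sub (measurable_const.mul hfm))
  have hgf : ∀ v, g v ≤ f v := fun v => by
    simp only [hg]
    nlinarith [hf0 v, hx0 v]
  have hgint : Integrable g := by
    apply hfint1.mono' hgm.aestronglyMeasurable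
    filter_upwards with v
    rw [Real.norm_eq_abs, abs_of_nonneg (hg0 v)]
    exact hgf v
  have hIA0 : 0 ≤ ∫ v in A, g v := setIntegral_nonneg hAmeas (fun v _ => hg0 v)
  have hE0 : 0 ≤ energy f₀ := by
    rw [← hener]
    exact integral_nonneg (fun v => mul_nonneg (hf0 v) (sq_nonneg _))
  set E := energy f₀ with hEdef
  have hEf : (∫ v, f v * ‖v‖ ^ 2) = E := by rw [← hener]; rfl
  -- Pointwise ball bound
  have PBball : ∀ v, H v ≤ (4 + 4 * |log ε| + 32 * log R) * g v + 8 / R ^ 4 := by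
    intro v
    have hquad : h v ≤ 4 * (ε * g v) * (1 - log (ε * g v)) := by
      have hq := neg_phi_le_quad (hx0 v) (hx1 v)
      have hrw : (ε * f v) * (1 - ε * f v) = ε * g v := by simp only [hg]; ring
      simp only [hh, hφ]
      rw [← hrw]
      exact hq
    rcases (hg0 v).lt_or_eq with hgv | hgv
    · have hlog : log (ε * g v) = log ε + log (g v) := Real.log_mul (ne_of_gt hε) (ne_of_gt hgv)
      have step : H v ≤ 4 * g v * (1 - log ε - log (g v)) := by
        have h2 := mul_le_mul_of_nonneg_left hquad hεinv.le
        rw [hH]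
        calc ε⁻¹ * h v ≤ ε⁻¹ * (4 * (ε * g v) * (1 - log (ε * g v))) := h2
          _ = 4 * g v * (1 - log ε - log (g v)) := by
              rw [hlog]; field_simp; ring
      have a1 : g v * (-log ε) ≤ g v * |log ε| :=
        mul_le_mul_of_nonneg_left (neg_le_abs _) (hg0 v)
      have a2 : g v * (-log (g v)) ≤ g v * max (-log (g v)) 0 :=
        mul_le_mul_of_nonneg_left (le_max_left _ _) (hg0 v)
      have l4 := L4 (hg0 v) hR
      have c1 : 4 * g v * (1 - log ε - log (g v))
          = 4 * g v + 4 * (g v * (-log ε)) + 4 * (g v * (-log (g v))) := by ring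
      have c2 : (4 + 4 * |log ε| + 32 * log R) * g v + 8 / R ^ 4
          = 4 * g v + 4 * (g v * |log ε|) + (4 * (8 * g v * log R) + 4 * (2 / R ^ 4)) := by ring
      have a2' : 4 * (g v * (-log (g v))) ≤ 4 * (8 * g v * log R + 2 / R ^ 4) := by linarith
      linarith [step, a1, c1, c2, a2']
    · have hz : ε * g v = 0 := by rw [← hgv]; ring
      rw [hz] at hquad
      simp at hquad
      have h3 : H v ≤ 0 := mul_nonpos_of_nonneg_of_nonpos hεinv.le hquad
      have h4 : (0:ℝ) < 8 / R ^ 4 := by positivity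
      have h5 : (4 + 4 * |log ε| + 32 * log R) * g v = 0 := by rw [← hgv]; ring
      linarith
  -- integral bound on the ball
  have hvol : (volume A).toReal = 4 * π / 3 * R ^ 3 := by
    rw [hA]; exact volE3_closedBall hR0.le
  have hball : (∫ v in A, H v)
      ≤ (4 + 4 * |log ε| + 32 * log R) * (∫ v in A, g v) + 8 / R ^ 4 * (4 * π / 3 * R ^ 3) := by
    have hrhs : IntegrableOn (fun v => (4 + 4 * |log ε| + 32 * log R) * g v + 8 / R ^ 4) A := by
      apply (hgint.const_mul _).integrableOn.add
      exact integrableOn_const measure_closedBall_lt_top.ne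
    have := setIntegral_mono_on hHint.integrableOn hrhs hAmeas (fun v _ => PBball v)
    calc (∫ v in A, H v)
        ≤ ∫ v in A, ((4 + 4 * |log ε| + 32 * log R) * g v + 8 / R ^ 4) := this
      _ = (4 + 4 * |log ε| + 32 * log R) * (∫ v in A, g v) + 8 / R ^ 4 * (4 * π / 3 * R ^ 3) := by
          rw [integral_add ((hgint.const_mul _).integrableOn)
            (integrableOn_const measure_closedBall_lt_top.ne)]
          rw [MeasureTheory.integral_const_mul, setIntegral_const, measureReal_def, hvol, smul_eq_mul, mul_comm]
          ring
  -- constant from the ball volume term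
  have hpi4 : π ≤ 4 := by linarith [Real.pi_le_four]
  have hconst1 : 8 / R ^ 4 * (4 * π / 3 * R ^ 3) ≤ 43 / R := by
    have h1 : 8 / R ^ 4 * (4 * π / 3 * R ^ 3) = 32 * π / 3 / R := by
      field_simp; ring
    rw [h1, div_le_div_iff₀ hR0 hR0]
    nlinarith [hpi4, hR0]
  -- ball estimate, final form
  have hball2 : (∫ v in A, H v) ≤ 80 * (|log ε| + log R) * (∫ v in A, g v) + 1500 / R := by
    rcases le_or_gt (1/10) (|log ε| + log R) with hcase | hcase
    · have hco : (4 + 4 * |log ε| + 32 * log R) * (∫ v in A, g v)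
          ≤ 80 * (|log ε| + log R) * (∫ v in A, g v) := by
        apply mul_le_mul_of_nonneg_right ?_ hIA0
        linarith
      have h15 : 43 / R ≤ 1500 / R := by
        rw [div_le_div_iff₀ hR0 hR0]; nlinarith [hR0]
      linarith [hball, hconst1]
    · have hle : |log ε| < 1/10 := by linarith
      have hlRle : log R < 1/10 := by linarith
      have hε2 : ε⁻¹ ≤ 2 := by
        have h1 : Real.log ε⁻¹ ≤ 1/10 := by
          rw [Real.log_inv]
          calc -log ε ≤ |log ε| := neg_le_abs _
            _ ≤ 1/10 := hle.le
        have h2 : ε⁻¹ = Real.exp (Real.log ε⁻¹) := (Real.exp_log hεinv).symm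
        rw [h2]
        calc Real.exp (Real.log ε⁻¹) ≤ Real.exp (1/10) := Real.exp_le_exp.mpr h1
          _ ≤ Real.exp (Real.log 2) := Real.exp_le_exp.mpr (by linarith [Real.log_two_gt_d9])
          _ = 2 := Real.exp_log (by norm_num)
      have hR2 : R ≤ 2 := by
        have h2 : R = Real.exp (Real.log R) := (Real.exp_log hR0).symm
        rw [h2]
        calc Real.exp (Real.log R) ≤ Real.exp (1/10) := Real.exp_le_exp.mpr hlRle.le
          _ ≤ Real.exp (Real.log 2) := Real.exp_le_exp.mpr (by linarith [Real.log_two_gt_d9])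
          _ = 2 := Real.exp_log (by norm_num)
      have hIA : (∫ v in A, g v) ≤ (4 * π / 3 * R ^ 3) * ε⁻¹ := by
        have hgb : ∀ v ∈ A, g v ≤ ε⁻¹ := fun v _ => le_trans (hgf v) (hf1 v)
        calc (∫ v in A, g v) ≤ ∫ _v in A, ε⁻¹ :=
              setIntegral_mono_on hgint.integrableOn
                (integrableOn_const measure_closedBall_lt_top.ne) hAmeas hgb
          _ = (volume A).toReal * ε⁻¹ := by rw [setIntegral_const, measureReal_def, smul_eq_mul]
          _ = (4 * π / 3 * R ^ 3) * ε⁻¹ := by rw [hvol]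
      have hIAb : (∫ v in A, g v) ≤ 86 := by
        calc (∫ v in A, g v) ≤ (4 * π / 3 * R ^ 3) * ε⁻¹ := hIA
          _ ≤ (4 * 4 / 3 * 2 ^ 3) * 2 := by
              apply mul_le_mul ?_ hε2 hεinv.le (by positivity)
              have h3 : R ^ 3 ≤ 2 ^ 3 := pow_le_pow_left₀ hR0.le hR2 3
              nlinarith [pi_pos]
          _ ≤ 86 := by norm_num
      have h4g : 4 * (∫ v in A, g v) ≤ 688 / R := by
        rw [le_div_iff₀ hR0]
        nlinarith [hIA0]
      have hco : (4 * |log ε| + 32 * log R) * (∫ v in A, g v)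
          ≤ 80 * (|log ε| + log R) * (∫ v in A, g v) := by
        apply mul_le_mul_of_nonneg_right ?_ hIA0
        linarith
      have expand : (4 + 4 * |log ε| + 32 * log R) * (∫ v in A, g v)
          = 4 * (∫ v in A, g v) + (4 * |log ε| + 32 * log R) * (∫ v in A, g v) := by ring
      have hsum : 688 / R + 43 / R ≤ 1500 / R := by
        rw [← add_div, div_le_div_iff₀ hR0 hR0]; nlinarith [hR0]
      linarith [hball, hconst1]
  -- tail pointwise bound
  have PBtail : ∀ v ∈ Aᶜ, H v ≤ (1 + |log ε|) / R ^ 2 * (f v * ‖v‖ ^ 2)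
      + (1 / R) * (f v * ‖v‖ ^ 2) + (1 / R) * (‖v‖ * Real.exp (-‖v‖)) := by
    intro v hv
    have hvR : R < ‖v‖ := by
      simp only [hA, Set.mem_compl_iff, Metric.mem_closedBall, dist_zero_right, not_le] at hv
      exact hv
    have hpb := PB v
    have t1 : f v * (1 + |log ε|) ≤ (1 + |log ε|) / R ^ 2 * (f v * ‖v‖ ^ 2) := by
      rw [div_mul_eq_mul_div, le_div_iff₀ (by positivity)]
      nlinarith [mul_nonneg (mul_nonneg (hf0 v) (by linarith : (0:ℝ) ≤ 1 + |log ε|))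
        (sub_nonneg.mpr (by nlinarith : R ^ 2 ≤ ‖v‖ ^ 2))]
    have t2 : f v * ‖v‖ ≤ (1 / R) * (f v * ‖v‖ ^ 2) := by
      rw [one_div, inv_mul_eq_div, le_div_iff₀ hR0]
      nlinarith [mul_nonneg (mul_nonneg (hf0 v) (norm_nonneg v)) (sub_nonneg.mpr hvR.le)]
    have t3 : Real.exp (-‖v‖) ≤ (1 / R) * (‖v‖ * Real.exp (-‖v‖)) := by
      rw [one_div, inv_mul_eq_div, le_div_iff₀ hR0]
      nlinarith [Real.exp_pos (-‖v‖), mul_nonneg (Real.exp_pos (-‖v‖)).le (sub_nonneg.mpr hvR.le)]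
    simp only [hH]
    linarith [hpb]
  -- tail integral bound
  have htail : (∫ v in Aᶜ, H v) ≤ |log ε| * E / R ^ 2 + (2 * E + 96) / R := by
    have hTint : Integrable (fun v => (1 + |log ε|) / R ^ 2 * (f v * ‖v‖ ^ 2)
        + (1 / R) * (f v * ‖v‖ ^ 2) + (1 / R) * (‖v‖ * Real.exp (-‖v‖))) :=
      ((hfksq.const_mul _).add (hfksq.const_mul _)).add (integrable_norm_exp_norm.const_mul _)
    have step1 := setIntegral_mono_on hHint.integrableOn hTint.integrableOn hAmeas.compl PBtail
    have step2 : (∫ v in Aᶜ, ((1 + |log ε|) / R ^ 2 * (f v * ‖v‖ ^ 2)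
        + (1 / R) * (f v * ‖v‖ ^ 2) + (1 / R) * (‖v‖ * Real.exp (-‖v‖))))
        ≤ ∫ v, ((1 + |log ε|) / R ^ 2 * (f v * ‖v‖ ^ 2)
        + (1 / R) * (f v * ‖v‖ ^ 2) + (1 / R) * (‖v‖ * Real.exp (-‖v‖))) := by
      apply setIntegral_le_integral hTint
      filter_upwards with v
      have h1 := hf0 v
      have h2 := sq_nonneg ‖v‖
      have h3 := (Real.exp_pos (-‖v‖)).le
      have h4 := norm_nonneg v
      have h5 : (0:ℝ) ≤ 1 + |log ε| := by linarith
      positivity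
    have ha : Integrable (fun v : E3 => (1 + |log ε|) / R ^ 2 * (f v * ‖v‖ ^ 2)) :=
      hfksq.const_mul _
    have hb : Integrable (fun v : E3 => (1 / R) * (f v * ‖v‖ ^ 2)) := hfksq.const_mul _
    have hc : Integrable (fun v : E3 => (1 / R) * (‖v‖ * Real.exp (-‖v‖))) :=
      integrable_norm_exp_norm.const_mul _
    have s1 : (∫ v, ((1 + |log ε|) / R ^ 2 * (f v * ‖v‖ ^ 2)
          + (1 / R) * (f v * ‖v‖ ^ 2) + (1 / R) * (‖v‖ * Real.exp (-‖v‖))))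
        = (∫ v, ((1 + |log ε|) / R ^ 2 * (f v * ‖v‖ ^ 2) + (1 / R) * (f v * ‖v‖ ^ 2)))
          + ∫ v : E3, (1 / R) * (‖v‖ * Real.exp (-‖v‖)) := integral_add (ha.add hb) hc
    have s2 : (∫ v, ((1 + |log ε|) / R ^ 2 * (f v * ‖v‖ ^ 2) + (1 / R) * (f v * ‖v‖ ^ 2)))
        = (∫ v, (1 + |log ε|) / R ^ 2 * (f v * ‖v‖ ^ 2))
          + ∫ v, (1 / R) * (f v * ‖v‖ ^ 2) := integral_add ha hb
    have s3 : (∫ v, (1 + |log ε|) / R ^ 2 * (f v * ‖v‖ ^ 2))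
        = (1 + |log ε|) / R ^ 2 * E := by
      rw [MeasureTheory.integral_const_mul, hEf]
    have s4 : (∫ v, (1 / R) * (f v * ‖v‖ ^ 2)) = (1 / R) * E := by
      rw [MeasureTheory.integral_const_mul, hEf]
    have s5 : (∫ v : E3, (1 / R) * (‖v‖ * Real.exp (-‖v‖))) = (1 / R) * (24 * π) := by
      rw [MeasureTheory.integral_const_mul, W_val]
    have step3 : (∫ v, ((1 + |log ε|) / R ^ 2 * (f v * ‖v‖ ^ 2)
        + (1 / R) * (f v * ‖v‖ ^ 2) + (1 / R) * (‖v‖ * Real.exp (-‖v‖))))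
        = (1 + |log ε|) / R ^ 2 * E + (1 / R) * E + (1 / R) * (24 * π) := by
      rw [s1, s2, s3, s4, s5]
    have hER : E / R ^ 2 ≤ E / R := by
      rw [div_le_div_iff₀ (by positivity) hR0]
      nlinarith [mul_nonneg hE0 (by nlinarith : (0:ℝ) ≤ R ^ 2 - R)]
    have e1 : (1 + |log ε|) / R ^ 2 * E = E / R ^ 2 + |log ε| * E / R ^ 2 := by ring
    have e2 : (1 / R) * E = E / R := by ring
    have e3 : (1 / R) * (24 * π) ≤ 96 / R := by
      rw [one_div, inv_mul_eq_div, div_le_div_iff₀ hR0 hR0]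
      nlinarith [hpi4, hR0]
    have e4 : (2 * E + 96) / R = E / R + E / R + 96 / R := by ring
    linarith [step1, step2, step3]
  -- final assembly
  show fdEnt ε f ≤ 80 * (|log ε| + log R) * (∫ v in A, g v)
      + (2 * |E| + 2000) / R + |log ε| * E / R ^ 2
  rw [abs_of_nonneg hE0]
  have h404 : (0:ℝ) ≤ 404 / R := by positivity
  have hsplitC : (2 * E + 2000) / R = 1500 / R + (2 * E + 96) / R + 404 / R := by ring
  have hfin : fdEnt ε f = (∫ v in A, H v) + ∫ v in Aᶜ, H v := by rw [hfdH, hsplit]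
  linarith [hball2, htail]

end
end

section
/- Let f₀ ∈ L¹₂(ℝ³) be nonnegative and bounded with ‖f₀‖_∞ = 1/ε₀ ∈ (0,∞), 𝒮_{ε₀}(f₀) > 0, and finite Boltzmann entropy H(f₀). Then for every δ > 0 there exists η(δ) > 0, depending only on M(f₀), E(f₀) and H(f₀), such that for every ε ∈ (0, ε₀], every f ∈ 𝒴_ε(f₀), and every measurable set A ⊂ ℝ³ with Lebesgue measure |A| ≤ η(δ), one has ∫_A f(v)(1−ε f(v)) dv ≤ δ. In particular, for any f ∈ 𝒴_ε(f₀) one has ∫ f log f dv ≤ ∫ f₀ log f₀ dv + M(f₀). -/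
open MeasureTheory Real

noncomputable section

/-- Boltzmann entropy `H(f) = ∫ f log f`. -/
def boltzEnt (f : E3 → ℝ) : ℝ := ∫ v, f v * log (f v)

lemma my_gauss_integrable : Integrable (fun v : E3 => exp (-‖v‖^2)) := by
  have h := (GaussianFourier.integrable_cexp_neg_mul_sq_norm_add (V := E3) (b := 1) (by norm_num) 0 0).norm
  simpa [Complex.norm_exp, ← Complex.ofReal_pow] using h

lemma my_aux1 (x t : ℝ) (hx : 0 ≤ x) : -(x * log x) ≤ x * t + exp (-1 - t) := by
  rcases hx.eq_or_lt with h|h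
  · simp [← h]; positivity
  · have he : (0:ℝ) < exp (-t) / x := by positivity
    have h1 : log (exp (-t) / x) ≤ exp (-t) / x / exp 1 := by
      have h2 := log_le_sub_one_of_pos (show (0:ℝ) < exp (-t) / x / exp 1 by positivity)
      rw [log_div he.ne' (exp_ne_zero 1), log_exp] at h2
      linarith
    have h3 : x * log (exp (-t) / x) ≤ exp (-t) / exp 1 := by
      calc x * log (exp (-t)/x) ≤ x * (exp (-t)/x/exp 1) :=
            mul_le_mul_of_nonneg_left h1 hx
        _ = exp (-t)/exp 1 := by field_simp
    have h4 : log (exp (-t) / x) = -t - log x := by rw [log_div (exp_ne_zero _) h.ne', log_exp]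
    have h5 : exp (-t) / exp 1 = exp (-1 - t) := by rw [← exp_sub]; ring_nf
    rw [h4, h5] at h3
    nlinarith

lemma my_aux2 (x : ℝ) (hx : x ≤ 1) : -x ≤ (1 - x) * log (1 - x) := by
  rcases hx.eq_or_lt with h|h
  · simp [h]
  · have h1 : (0:ℝ) < 1 - x := by linarith
    have h2 := log_le_sub_one_of_pos (show (0:ℝ) < (1-x)⁻¹ by positivity)
    rw [log_inv] at h2
    have h3 : 1 - (1-x)⁻¹ ≤ log (1 - x) := by linarith
    have h4 := mul_le_mul_of_nonneg_left h3 h1.le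
    have h5 : (1-x) * (1 - (1-x)⁻¹) = -x := by field_simp; ring
    linarith [h5 ▸ h4]

lemma my_aux3 (x : ℝ) (h0 : 0 ≤ x) (h1 : x ≤ 1) : (1 - x) * log (1 - x) ≤ 0 := by
  have := log_nonpos (by linarith : (0:ℝ) ≤ 1 - x) (by linarith : (1:ℝ) - x ≤ 1)
  nlinarith

lemma my_gauss1_integrable : Integrable (fun v : E3 => exp (-1 - ‖v‖^2)) := by
  have h : (fun v : E3 => exp (-1 - ‖v‖^2)) = fun v => exp (-1) * exp (-‖v‖^2) := by
    funext v; rw [← exp_add]; ring_nf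
  rw [h]; exact my_gauss_integrable.const_mul _

lemma my_int_base {g : E3 → ℝ} (hm : Measurable g) (h0 : ∀ v, 0 ≤ g v)
    (hint : Integrable (fun v => g v * (1 + ‖v‖ ^ 2))) : Integrable g := by
  refine hint.mono' hm.aestronglyMeasurable (Filter.Eventually.of_forall fun v => ?_)
  have h1 := h0 v; have h2 : (0:ℝ) ≤ ‖v‖^2 := sq_nonneg _
  rw [Real.norm_eq_abs, abs_of_nonneg h1]; nlinarith

lemma my_int_energy {g : E3 → ℝ} (hm : Measurable g) (h0 : ∀ v, 0 ≤ g v)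
    (hint : Integrable (fun v => g v * (1 + ‖v‖ ^ 2))) :
    Integrable (fun v => g v * ‖v‖ ^ 2) := by
  refine hint.mono' (hm.mul (measurable_norm.pow_const 2)).aestronglyMeasurable
    (Filter.Eventually.of_forall fun v => ?_)
  have h1 := h0 v; have h2 : (0:ℝ) ≤ ‖v‖^2 := sq_nonneg _
  rw [Real.norm_eq_abs, abs_of_nonneg (mul_nonneg h1 h2)]; nlinarith

lemma my_int_mul_log {ε : ℝ} (hε : 0 < ε) {g : E3 → ℝ} (hm : Measurable g) (h0 : ∀ v, 0 ≤ g v)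
    (hle : ∀ᵐ v, g v ≤ ε⁻¹) (hint : Integrable (fun v => g v * (1 + ‖v‖ ^ 2))) :
    Integrable (fun v => g v * log (g v)) := by
  have hD : Integrable (fun v => g v * |log ε⁻¹| + (g v * ‖v‖^2 + exp (-1 - ‖v‖^2))) :=
    ((my_int_base hm h0 hint).mul_const _).add ((my_int_energy hm h0 hint).add my_gauss1_integrable)
  refine hD.mono' (hm.mul (measurable_log.comp hm)).aestronglyMeasurable ?_
  filter_upwards [hle] with v hv
  have h1 := my_aux1 (g v) (‖v‖^2) (h0 v)
  have h2 : g v * log (g v) ≤ g v * |log ε⁻¹| := by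
    rcases (h0 v).eq_or_lt with h|h
    · simp [← h]
    · calc g v * log (g v) ≤ g v * log ε⁻¹ :=
            mul_le_mul_of_nonneg_left (Real.log_le_log h hv) (h0 v)
        _ ≤ g v * |log ε⁻¹| := mul_le_mul_of_nonneg_left (le_abs_self _) (h0 v)
  rw [Real.norm_eq_abs, abs_le]
  constructor
  · have h3 : 0 ≤ g v * |log ε⁻¹| := mul_nonneg (h0 v) (abs_nonneg _)
    linarith
  · have h4 := exp_pos (-1-‖v‖^2)
    have h5 : 0 ≤ g v * ‖v‖^2 := mul_nonneg (h0 v) (sq_nonneg _)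
    linarith

lemma my_int_phi {ε : ℝ} (hε : 0 < ε) {g : E3 → ℝ} (hm : Measurable g) (h0 : ∀ v, 0 ≤ g v)
    (hle : ∀ᵐ v, g v ≤ ε⁻¹) (hint : Integrable (fun v => g v * (1 + ‖v‖ ^ 2))) :
    Integrable (fun v => ε * g v * log (ε * g v) + (1 - ε * g v) * log (1 - ε * g v)) := by
  have hD : Integrable (fun v => exp (-1 - ‖v‖^2) + ε * (g v * (1 + ‖v‖^2))) :=
    my_gauss1_integrable.add (hint.const_mul ε)
  have h1m : Measurable (fun v : E3 => ε * g v) := measurable_const.mul hm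
  refine hD.mono' ((h1m.mul (measurable_log.comp h1m)).add
    ((measurable_const.sub h1m).mul
      (measurable_log.comp (measurable_const.sub h1m)))).aestronglyMeasurable ?_
  filter_upwards [hle] with v hv
  have hx0 : 0 ≤ ε * g v := mul_nonneg hε.le (h0 v)
  have hx1 : ε * g v ≤ 1 := by
    calc ε * g v ≤ ε * ε⁻¹ := mul_le_mul_of_nonneg_left hv hε.le
      _ = 1 := mul_inv_cancel₀ hε.ne'
  have hxl : ε * g v * log (ε * g v) ≤ 0 :=
    mul_nonpos_iff.mpr (Or.inl ⟨hx0, log_nonpos hx0 hx1⟩)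
  have h2 := my_aux2 (ε * g v) hx1
  have h3 := my_aux3 (ε * g v) hx0 hx1
  have h1 := my_aux1 (ε * g v) (‖v‖^2) hx0
  have hxe : ε * (g v * (1 + ‖v‖^2)) = ε * g v + ε * g v * ‖v‖^2 := by ring
  rw [Real.norm_eq_abs, abs_of_nonpos (by linarith)]
  linarith

/-- Uniform absolute continuity of `∫_A f(1-εf)` over `ε ∈ (0,ε₀]` and `f ∈ 𝒴_ε(f₀)`:
for each `δ > 0` there is `η(δ) > 0`, depending only on `M(f₀)`, `E(f₀)` and `H(f₀)`,
such that `|A| ≤ η(δ)` implies `∫_A f(1-εf) ≤ δ`.  In particular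
`∫ f log f ≤ ∫ f₀ log f₀ + M(f₀)`. -/
theorem stmt4 :
    ∃ η : ℝ → ℝ → ℝ → ℝ → ℝ,
      ∀ (ε₀ : ℝ) (f₀ : E3 → ℝ), 0 < ε₀ →
        Measurable f₀ → (∀ v, 0 ≤ f₀ v) →
        Integrable (fun v => f₀ v * (1 + ‖v‖ ^ 2)) →
        eLpNorm f₀ ⊤ volume = ENNReal.ofReal ε₀⁻¹ →
        0 < fdEnt ε₀ f₀ →
        Integrable (fun v => f₀ v * log (f₀ v)) →
        ∀ δ : ℝ, 0 < δ →
          0 < η δ (mass f₀) (energy f₀) (boltzEnt f₀) ∧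
          ∀ ε : ℝ, 0 < ε → ε ≤ ε₀ → ∀ f : E3 → ℝ, memY ε f₀ f →
            (∀ A : Set E3, MeasurableSet A →
                volume A ≤ ENNReal.ofReal (η δ (mass f₀) (energy f₀) (boltzEnt f₀)) →
                ∫ v in A, f v * (1 - ε * f v) ≤ δ) ∧
            boltzEnt f ≤ boltzEnt f₀ + mass f₀ := by
  refine ⟨fun δ M E H =>
    δ / (2 * exp (2 * max (H + M + E + exp (-1) * ∫ v : E3, exp (-‖v‖^2)) 1 / δ)), ?_⟩
  intro ε₀ f₀ hε₀ hf₀m hf₀0 hf₀int hf₀sup hf₀fd hf₀H δ hδ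
  dsimp only
  constructor
  · positivity
  intro ε hε hεε₀ f hf
  obtain ⟨hfm, hf0, hfle, hfint, hmass, hener, hfd⟩ := hf
  -- a.e. bound on f₀
  have hf₀le : ∀ᵐ v, f₀ v ≤ ε⁻¹ := by
    have h1 : ∀ᵐ v, (‖f₀ v‖₊ : ENNReal) ≤ eLpNormEssSup f₀ volume :=
      ae_le_eLpNormEssSup
    rw [← eLpNorm_exponent_top, hf₀sup] at h1
    filter_upwards [h1] with v hv
    have h2 : ‖f₀ v‖ ≤ ε₀⁻¹ := by
      rw [← ENNReal.ofReal_le_ofReal_iff (by positivity), ofReal_norm_eq_enorm]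
      exact hv
    have h3 : ε₀⁻¹ ≤ ε⁻¹ := by
      apply inv_anti₀ hε hεε₀
    calc f₀ v ≤ ‖f₀ v‖ := le_abs_self _
      _ ≤ ε₀⁻¹ := h2
      _ ≤ ε⁻¹ := h3
  have hfle' : ∀ᵐ v, f v ≤ ε⁻¹ := Filter.Eventually.of_forall hfle
  -- integrability facts
  have hf₀1 : Integrable f₀ := my_int_base hf₀m hf₀0 hf₀int
  have hf1 : Integrable f := my_int_base hfm hf0 hfint
  have hfE : Integrable (fun v => f v * ‖v‖ ^ 2) := my_int_energy hfm hf0 hfint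
  have hflog : Integrable (fun v => f v * log (f v)) := my_int_mul_log hε hfm hf0 hfle' hfint
  have hφf : Integrable
      (fun v => ε * f v * log (ε * f v) + (1 - ε * f v) * log (1 - ε * f v)) :=
    my_int_phi hε hfm hf0 hfle' hfint
  have hφf₀ : Integrable
      (fun v => ε * f₀ v * log (ε * f₀ v) + (1 - ε * f₀ v) * log (1 - ε * f₀ v)) :=
    my_int_phi hε hf₀m hf₀0 hf₀le hf₀int
  -- Part 2 : Boltzmann entropy bound
  have hpart2 : boltzEnt f ≤ boltzEnt f₀ + mass f₀ := by
    have hA : ε * boltzEnt f ≤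
        (∫ v, (ε * f v * log (ε * f v) + (1 - ε * f v) * log (1 - ε * f v)))
          + (ε - ε * log ε) * mass f := by
      have hmono : ∀ᵐ v : E3, ε * (f v * log (f v)) ≤
          (ε * f v * log (ε * f v) + (1 - ε * f v) * log (1 - ε * f v))
            + (ε - ε * log ε) * f v := by
        refine Filter.Eventually.of_forall fun v => ?_
        rcases (hf0 v).eq_or_lt with h|h
        · simp [← h]
        · have hlm : log (ε * f v) = log ε + log (f v) := log_mul hε.ne' h.ne'
          have hx1 : ε * f v ≤ 1 := by
            calc ε * f v ≤ ε * ε⁻¹ := mul_le_mul_of_nonneg_left (hfle v) hε.le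
              _ = 1 := mul_inv_cancel₀ hε.ne'
          have h2 := my_aux2 (ε * f v) hx1
          rw [hlm]; nlinarith
      calc ε * boltzEnt f = ∫ v, ε * (f v * log (f v)) := (integral_const_mul ε _).symm
        _ ≤ ∫ v, ((ε * f v * log (ε * f v) + (1 - ε * f v) * log (1 - ε * f v))
              + (ε - ε * log ε) * f v) :=
            integral_mono_ae (hflog.const_mul ε) (hφf.add (hf1.const_mul _)) hmono
        _ = (∫ v, (ε * f v * log (ε * f v) + (1 - ε * f v) * log (1 - ε * f v)))
              + (ε - ε * log ε) * mass f := by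
            rw [integral_add hφf (hf1.const_mul _), integral_const_mul]; rfl
    have hB : (∫ v, (ε * f v * log (ε * f v) + (1 - ε * f v) * log (1 - ε * f v)))
        ≤ ∫ v, (ε * f₀ v * log (ε * f₀ v) + (1 - ε * f₀ v) * log (1 - ε * f₀ v)) := by
      have hfd' : -ε⁻¹ * (∫ v, (ε * f₀ v * log (ε * f₀ v) + (1 - ε * f₀ v) * log (1 - ε * f₀ v)))
          ≤ -ε⁻¹ * (∫ v, (ε * f v * log (ε * f v) + (1 - ε * f v) * log (1 - ε * f v))) := hfd
      have hεi : (0:ℝ) < ε⁻¹ := inv_pos.mpr hε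
      nlinarith [hfd', hεi]
    have hC : (∫ v, (ε * f₀ v * log (ε * f₀ v) + (1 - ε * f₀ v) * log (1 - ε * f₀ v)))
        ≤ ε * boltzEnt f₀ + (ε * log ε) * mass f₀ := by
      have hmono₀ : ∀ᵐ v : E3, (ε * f₀ v * log (ε * f₀ v) + (1 - ε * f₀ v) * log (1 - ε * f₀ v))
          ≤ ε * (f₀ v * log (f₀ v)) + (ε * log ε) * f₀ v := by
        filter_upwards [hf₀le] with v hv
        rcases (hf₀0 v).eq_or_lt with h|h
        · simp [← h]
        · have hlm : log (ε * f₀ v) = log ε + log (f₀ v) := log_mul hε.ne' h.ne'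
          have hx1 : ε * f₀ v ≤ 1 := by
            calc ε * f₀ v ≤ ε * ε⁻¹ := mul_le_mul_of_nonneg_left hv hε.le
              _ = 1 := mul_inv_cancel₀ hε.ne'
          have h3 := my_aux3 (ε * f₀ v) (mul_nonneg hε.le (hf₀0 v)) hx1
          rw [hlm]; nlinarith
      calc (∫ v, (ε * f₀ v * log (ε * f₀ v) + (1 - ε * f₀ v) * log (1 - ε * f₀ v)))
          ≤ ∫ v, (ε * (f₀ v * log (f₀ v)) + (ε * log ε) * f₀ v) :=
            integral_mono_ae hφf₀ ((hf₀H.const_mul ε).add (hf₀1.const_mul _)) hmono₀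
        _ = ε * boltzEnt f₀ + (ε * log ε) * mass f₀ := by
            rw [integral_add (hf₀H.const_mul ε) (hf₀1.const_mul _),
              integral_const_mul, integral_const_mul]; rfl
    have hfin : ε * boltzEnt f ≤ ε * (boltzEnt f₀ + mass f₀) := by
      rw [hmass] at hA; nlinarith
    exact (mul_le_mul_iff_right₀ hε).mp hfin
  refine ⟨?_, hpart2⟩
  -- Part 1
  intro A hAm hAle
  set G : ℝ := ∫ v : E3, exp (-‖v‖^2) with hGdef
  set C : ℝ := max (boltzEnt f₀ + mass f₀ + energy f₀ + exp (-1) * G) 1 with hCdef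
  have hC1 : (1:ℝ) ≤ C := le_max_right _ _
  set K : ℝ := exp (2 * C / δ) with hKdef
  have hKpos : 0 < K := exp_pos _
  have hlogK : log K = 2 * C / δ := log_exp _
  have hlogKpos : 0 < log K := by rw [hlogK]; apply div_pos <;> nlinarith
  set p : E3 → ℝ := fun v => f v * log (f v) + (f v * ‖v‖ ^ 2 + exp (-1 - ‖v‖ ^ 2))
    with hpdef
  have hp0 : ∀ v, 0 ≤ p v := fun v => by
    have := my_aux1 (f v) (‖v‖^2) (hf0 v); simp only [hpdef]; linarith
  have hpint : Integrable p := hflog.add (hfE.add my_gauss1_integrable)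
  have hpval : ∫ v, p v = boltzEnt f + (energy f + exp (-1) * G) := by
    simp only [hpdef]
    rw [integral_add hflog ((hfE.add my_gauss1_integrable :
        Integrable (fun v : E3 => f v * ‖v‖ ^ 2 + exp (-1 - ‖v‖ ^ 2)))),
      integral_add hfE my_gauss1_integrable]
    congr 2
    rw [show (fun v : E3 => exp (-1 - ‖v‖^2)) = fun v => exp (-1) * exp (-‖v‖^2) from
      funext fun v => by rw [← exp_add]; ring_nf, integral_const_mul]
  have hple : ∫ v, p v ≤ C := by
    rw [hpval, hener]
    calc boltzEnt f + (energy f₀ + exp (-1) * G)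
        ≤ (boltzEnt f₀ + mass f₀) + (energy f₀ + exp (-1) * G) := by linarith
      _ = boltzEnt f₀ + mass f₀ + energy f₀ + exp (-1) * G := by ring
      _ ≤ C := le_max_left _ _
  have hεf1 : ∀ v, ε * f v ≤ 1 := fun v => by
    calc ε * f v ≤ ε * ε⁻¹ := mul_le_mul_of_nonneg_left (hfle v) hε.le
      _ = 1 := mul_inv_cancel₀ hε.ne'
  have hpt : ∀ v, f v * (1 - ε * f v) ≤ K + p v / log K := by
    intro v
    have h1 : f v * (1 - ε * f v) ≤ f v := by nlinarith [hf0 v, hεf1 v, mul_nonneg hε.le (hf0 v)]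
    rcases le_or_gt (f v) K with h|h
    · have : 0 ≤ p v / log K := div_nonneg (hp0 v) hlogKpos.le
      linarith
    · have h2 : f v * log K ≤ f v * log (f v) :=
        mul_le_mul_of_nonneg_left (Real.log_le_log hKpos h.le) (hf0 v)
      have h3 : f v * log (f v) ≤ p v := by
        have h4 := mul_nonneg (hf0 v) (sq_nonneg ‖v‖)
        have h5 := exp_pos (-1 - ‖v‖^2)
        simp only [hpdef]; linarith
      have h6 : f v ≤ p v / log K := (le_div_iff₀ hlogKpos).mpr (by linarith)
      linarith
  have hAfin : volume A < ⊤ := lt_of_le_of_lt hAle ENNReal.ofReal_lt_top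
  have hfAint : IntegrableOn (fun v => f v * (1 - ε * f v)) A := by
    refine (Integrable.mono' hf1
      ((hfm.mul (measurable_const.sub (measurable_const.mul hfm))).aestronglyMeasurable)
      (Filter.Eventually.of_forall fun v => ?_)).integrableOn
    have h1 : 0 ≤ 1 - ε * f v := by linarith [hεf1 v]
    show ‖f v * (1 - ε * f v)‖ ≤ f v
    rw [Real.norm_eq_abs, abs_of_nonneg (mul_nonneg (hf0 v) h1)]
    nlinarith [hf0 v, mul_nonneg hε.le (hf0 v)]
  have hcAint : IntegrableOn (fun _ : E3 => K) A :=
    integrableOn_const hAfin.ne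
  have hpAint : IntegrableOn (fun v => p v / log K) A :=
    (hpint.div_const _).integrableOn
  have htoReal : (volume A).toReal ≤ δ / (2 * K) :=
    ENNReal.toReal_le_of_le_ofReal (by positivity) hAle
  calc ∫ v in A, f v * (1 - ε * f v)
      ≤ ∫ v in A, (K + p v / log K) :=
        setIntegral_mono_on hfAint (hcAint.add hpAint) hAm (fun v _ => hpt v)
    _ = (volume A).toReal * K + (∫ v in A, p v) / log K := by
        rw [integral_add hcAint hpAint, setIntegral_const, integral_div, smul_eq_mul, measureReal_def]
    _ ≤ (δ / (2 * K)) * K + C / log K := by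
        have h7 : ∫ v in A, p v ≤ C :=
          le_trans (setIntegral_le_integral hpint (Filter.Eventually.of_forall hp0)) hple
        have h8 : (∫ v in A, p v) / log K ≤ C / log K := by gcongr
        nlinarith [mul_le_mul_of_nonneg_right htoReal hKpos.le]
    _ = δ := by
        rw [hlogK]
        have hCpos : 0 < C := by linarith
        field_simp
        ring

end
end

section
/- Let ε > 0 and let f, g ∈ L¹(ℝ³) ∩ L²(ℝ³) satisfy 0 ≤ f ≤ 1/ε, 0 ≤ g ≤ 1/ε, ∫ f dv = ∫ g dv, with H(f), H(g), 𝒮_ε(f), 𝒮_ε(g) all finite. Then | ℋ_ε(f|g) − ℋ₀(f|g) | ≤ ε · max( ‖f‖²_{L²}, ‖g‖²_{L²} ), where ℋ_ε(f|g) = 𝒮_ε(g) − 𝒮_ε(f) and ℋ₀(f|g) = H(f) − H(g). -/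
open MeasureTheory Real

noncomputable section

lemma aux_lower (x : ℝ) (hx1 : x ≤ 1) :
    0 ≤ x + (1 - x) * Real.log (1 - x) := by
  rcases eq_or_lt_of_le hx1 with rfl | h
  · norm_num
  · have h1 : (0:ℝ) < 1 - x := by linarith
    have h2 := Real.log_le_sub_one_of_pos (inv_pos.mpr h1)
    rw [Real.log_inv] at h2
    have h3 : (1 - x) * (1 - x)⁻¹ = 1 := mul_inv_cancel₀ h1.ne'
    nlinarith [mul_le_mul_of_nonneg_left h2 h1.le]

lemma aux_upper (x : ℝ) (hx1 : x ≤ 1) :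
    x + (1 - x) * Real.log (1 - x) ≤ x ^ 2 := by
  rcases eq_or_lt_of_le hx1 with rfl | h
  · norm_num
  · have h1 : (0:ℝ) < 1 - x := by linarith
    have h2 := Real.log_le_sub_one_of_pos h1
    nlinarith [mul_le_mul_of_nonneg_left h2 h1.le]

/-- Comparison of relative entropies: if `f, g ∈ L¹ ∩ L²`, `0 ≤ f, g ≤ 1/ε` share the
same mass, then `|ℋ_ε(f|g) − ℋ₀(f|g)| ≤ ε max(‖f‖²_{L²}, ‖g‖²_{L²})`, where
`ℋ_ε(f|g) = 𝒮_ε(g) − 𝒮_ε(f)` and `ℋ₀(f|g) = H(f) − H(g)`. -/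
theorem stmt13 (ε : ℝ) (hε : 0 < ε) (f g : E3 → ℝ)
    (hfint : Integrable f) (hfL2 : MemLp f 2 volume)
    (hgint : Integrable g) (hgL2 : MemLp g 2 volume)
    (hf0 : ∀ v, 0 ≤ f v) (hfε : ∀ v, f v ≤ ε⁻¹)
    (hg0 : ∀ v, 0 ≤ g v) (hgε : ∀ v, g v ≤ ε⁻¹)
    (hmass : (∫ v, f v) = ∫ v, g v)
    (hHf : Integrable (fun v => f v * log (f v)))
    (hHg : Integrable (fun v => g v * log (g v)))
    (hSf : Integrable (fun v =>
      ε * f v * log (ε * f v) + (1 - ε * f v) * log (1 - ε * f v)))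
    (hSg : Integrable (fun v =>
      ε * g v * log (ε * g v) + (1 - ε * g v) * log (1 - ε * g v))) :
    |(fdEnt ε g - fdEnt ε f) - (boltzEnt f - boltzEnt g)| ≤
      ε * max (∫ v, (f v) ^ 2) (∫ v, (g v) ^ 2) := by
  have hεf1 : ∀ v, ε * f v ≤ 1 := fun v => by
    have := mul_le_mul_of_nonneg_left (hfε v) hε.le
    rwa [mul_inv_cancel₀ hε.ne'] at this
  have hεg1 : ∀ v, ε * g v ≤ 1 := fun v => by
    have := mul_le_mul_of_nonneg_left (hgε v) hε.le
    rwa [mul_inv_cancel₀ hε.ne'] at this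
  -- splitting of ε f log (ε f)
  have heqf : (fun v => ε * f v * log (ε * f v))
      = fun v => ε * log ε * f v + ε * (f v * log (f v)) := by
    funext v
    rcases eq_or_lt_of_le (hf0 v) with h | h
    · simp [← h]
    · rw [Real.log_mul hε.ne' h.ne']; ring
  have heqg : (fun v => ε * g v * log (ε * g v))
      = fun v => ε * log ε * g v + ε * (g v * log (g v)) := by
    funext v
    rcases eq_or_lt_of_le (hg0 v) with h | h
    · simp [← h]
    · rw [Real.log_mul hε.ne' h.ne']; ring
  have hFf : Integrable (fun v => ε * f v * log (ε * f v)) := by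
    rw [heqf]; exact (hfint.const_mul _).add (hHf.const_mul _)
  have hFg : Integrable (fun v => ε * g v * log (ε * g v)) := by
    rw [heqg]; exact (hgint.const_mul _).add (hHg.const_mul _)
  have hφf : Integrable (fun v => (1 - ε * f v) * log (1 - ε * f v)) := by
    have h : (fun v => (1 - ε * f v) * log (1 - ε * f v))
        = (fun v => ε * f v * log (ε * f v) + (1 - ε * f v) * log (1 - ε * f v))
          - fun v => ε * f v * log (ε * f v) := by
      funext v; simp
    rw [h]; exact hSf.sub hFf
  have hφg : Integrable (fun v => (1 - ε * g v) * log (1 - ε * g v)) := by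
    have h : (fun v => (1 - ε * g v) * log (1 - ε * g v))
        = (fun v => ε * g v * log (ε * g v) + (1 - ε * g v) * log (1 - ε * g v))
          - fun v => ε * g v * log (ε * g v) := by
      funext v; simp
    rw [h]; exact hSg.sub hFg
  have hAf : Integrable (fun v => ε * f v + (1 - ε * f v) * log (1 - ε * f v)) :=
    (hfint.const_mul _).add hφf
  have hAg : Integrable (fun v => ε * g v + (1 - ε * g v) * log (1 - ε * g v)) :=
    (hgint.const_mul _).add hφg
  have hf2 : Integrable (fun v => (f v) ^ 2) := hfL2.integrable_sq
  have hg2 : Integrable (fun v => (g v) ^ 2) := hgL2.integrable_sq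
  set A := ∫ v, (ε * f v + (1 - ε * f v) * log (1 - ε * f v)) with hA
  set B := ∫ v, (ε * g v + (1 - ε * g v) * log (1 - ε * g v)) with hB
  set If := ∫ v, (f v) ^ 2 with hIf
  set Ig := ∫ v, (g v) ^ 2 with hIg
  -- bounds on A, B
  have hA0 : 0 ≤ A := integral_nonneg fun v => aux_lower _ (hεf1 v)
  have hB0 : 0 ≤ B := integral_nonneg fun v => aux_lower _ (hεg1 v)
  have hAu : A ≤ ε ^ 2 * If := by
    rw [hIf, ← integral_const_mul]
    refine integral_mono hAf (hf2.const_mul _) fun v => ?_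
    have := aux_upper _ (hεf1 v)
    calc ε * f v + (1 - ε * f v) * log (1 - ε * f v) ≤ (ε * f v) ^ 2 := this
      _ = ε ^ 2 * (f v) ^ 2 := by ring
  have hBu : B ≤ ε ^ 2 * Ig := by
    rw [hIg, ← integral_const_mul]
    refine integral_mono hAg (hg2.const_mul _) fun v => ?_
    have := aux_upper _ (hεg1 v)
    calc ε * g v + (1 - ε * g v) * log (1 - ε * g v) ≤ (ε * g v) ^ 2 := this
      _ = ε ^ 2 * (g v) ^ 2 := by ring
  -- the key identity
  have hint_f : (∫ v, (ε * f v * log (ε * f v) + (1 - ε * f v) * log (1 - ε * f v)))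
      = ε * log ε * (∫ v, f v) + ε * boltzEnt f + (A - ε * ∫ v, f v) := by
    rw [integral_add hFf hφf]
    have h1 : (∫ v, ε * f v * log (ε * f v))
        = ε * log ε * (∫ v, f v) + ε * boltzEnt f := by
      rw [heqf, integral_add (hfint.const_mul _) (hHf.const_mul _),
        integral_const_mul, integral_const_mul, boltzEnt]
    have h2 : (∫ v, (1 - ε * f v) * log (1 - ε * f v)) = A - ε * ∫ v, f v := by
      rw [hA, integral_add (hfint.const_mul _) hφf, integral_const_mul]; ring
    rw [h1, h2]
  have hint_g : (∫ v, (ε * g v * log (ε * g v) + (1 - ε * g v) * log (1 - ε * g v)))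
      = ε * log ε * (∫ v, g v) + ε * boltzEnt g + (B - ε * ∫ v, g v) := by
    rw [integral_add hFg hφg]
    have h1 : (∫ v, ε * g v * log (ε * g v))
        = ε * log ε * (∫ v, g v) + ε * boltzEnt g := by
      rw [heqg, integral_add (hgint.const_mul _) (hHg.const_mul _),
        integral_const_mul, integral_const_mul, boltzEnt]
    have h2 : (∫ v, (1 - ε * g v) * log (1 - ε * g v)) = B - ε * ∫ v, g v := by
      rw [hB, integral_add (hgint.const_mul _) hφg, integral_const_mul]; ring
    rw [h1, h2]
  have hkey : (fdEnt ε g - fdEnt ε f) - (boltzEnt f - boltzEnt g) = ε⁻¹ * (A - B) := by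
    rw [fdEnt, fdEnt, hint_f, hint_g, ← hmass]
    field_simp
    ring
  rw [hkey, abs_mul, abs_of_nonneg (inv_nonneg.mpr hε.le)]
  have habs : |A - B| ≤ max (ε ^ 2 * If) (ε ^ 2 * Ig) := by
    rw [abs_le]
    constructor
    · have := le_max_right (ε ^ 2 * If) (ε ^ 2 * Ig); linarith
    · have := le_max_left (ε ^ 2 * If) (ε ^ 2 * Ig); linarith
  calc ε⁻¹ * |A - B| ≤ ε⁻¹ * max (ε ^ 2 * If) (ε ^ 2 * Ig) := by
        exact mul_le_mul_of_nonneg_left habs (inv_nonneg.mpr hε.le)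
    _ = ε * max If Ig := by
        rw [← mul_max_of_nonneg If Ig (by positivity : (0:ℝ) ≤ ε ^ 2), ← mul_assoc]
        congr 1
        field_simp

end
end

section
/- Let ε, a, b, ρ, E > 0 and suppose ℳ_ε(v) = a e^{−b|v|²}/(1+εa e^{−b|v|²}) satisfies ∫_{ℝ³} ℳ_ε dv = ρ and ∫ |v|² ℳ_ε dv = 3ρE. Then the following two-sided bounds hold: π^{3/2} a b^{−3/2}/(1 + 2^{−3/2} εa) ≤ ρ ≤ π^{3/2} a b^{−3/2}, and π^{3/2} a b^{−5/2}/(1 + 2^{−5/2} εa) ≤ 2ρE ≤ π^{3/2} a b^{−5/2}. -/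
open MeasureTheory Real

noncomputable section

/-- Maxwellian `M(v) = a e^{-b|v|²}`. -/
def Mw (a b : ℝ) (v : E3) : ℝ := a * exp (-b * ‖v‖ ^ 2)

/-- Fermi–Dirac statistics `ℳ_ε = M/(1+εM)`. -/
def FD (ε a b : ℝ) (v : E3) : ℝ := Mw a b v / (1 + ε * Mw a b v)

lemma gauss_int (β : ℝ) (hβ : 0 < β) :
    ∫ v : E3, exp (-β * ‖v‖ ^ 2) = π ^ ((3:ℝ)/2) * β ^ (-(3:ℝ)/2) := by
  rw [GaussianFourier.integral_rexp_neg_mul_sq_norm hβ]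
  have : (Module.finrank ℝ E3 : ℝ) = 3 := by simp
  rw [this, div_rpow pi_nonneg hβ.le, neg_div, Real.rpow_neg hβ.le, div_eq_mul_inv]

lemma polar (f : ℝ → ℝ) :
    ∫ v : E3, f ‖v‖
      = 3 * (volume (Metric.ball (0:E3) 1)).toReal * ∫ y in Set.Ioi (0:ℝ), y ^ 2 * f y := by
  have h := MeasureTheory.integral_fun_norm_addHaar (E := E3) volume f
  simp only [finrank_euclideanSpace, Fintype.card_fin, smul_eq_mul, nsmul_eq_mul,
    Nat.cast_ofNat, measureReal_def] at h
  rw [h]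
  norm_num [mul_assoc]

lemma ioi_int2 (β : ℝ) (hβ : 0 < β) :
    ∫ y in Set.Ioi (0:ℝ), y ^ 2 * exp (-β * y ^ 2)
      = β ^ (-(3:ℝ)/2) * (1/2) * Gamma (3/2) := by
  have h := integral_rpow_mul_exp_neg_mul_rpow (p := 2) (q := 2) (b := β)
    two_pos (by norm_num) hβ
  rw [show (-(2+1)/2 : ℝ) = -(3:ℝ)/2 by norm_num, show ((2+1)/2 : ℝ) = 3/2 by norm_num] at h
  rw [← h]
  refine setIntegral_congr_fun measurableSet_Ioi fun x hx => ?_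
  norm_num [show ((2:ℝ) = ((2:ℕ):ℝ)) from by norm_num, Real.rpow_natCast]

lemma ioi_int4 (β : ℝ) (hβ : 0 < β) :
    ∫ y in Set.Ioi (0:ℝ), y ^ 2 * (y ^ 2 * exp (-β * y ^ 2))
      = β ^ (-(5:ℝ)/2) * (1/2) * ((3/2) * Gamma (3/2)) := by
  have h := integral_rpow_mul_exp_neg_mul_rpow (p := 2) (q := 4) (b := β)
    two_pos (by norm_num) hβ
  rw [show (-(4+1)/2 : ℝ) = -(5:ℝ)/2 by norm_num, show ((4+1)/2 : ℝ) = 3/2 + 1 by norm_num,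
    Real.Gamma_add_one (by norm_num)] at h
  rw [← h]
  refine setIntegral_congr_fun measurableSet_Ioi fun x hx => ?_
  have h2 : x ^ (2:ℝ) = x ^ (2:ℕ) := by
    rw [show ((2:ℝ) = ((2:ℕ):ℝ)) from by norm_num, Real.rpow_natCast]
  have h4 : x ^ (4:ℝ) = x ^ (4:ℕ) := by
    rw [show ((4:ℝ) = ((4:ℕ):ℝ)) from by norm_num, Real.rpow_natCast]
  rw [h2, h4]; ring

lemma gauss_int2 (β : ℝ) (hβ : 0 < β) :
    ∫ v : E3, ‖v‖ ^ 2 * exp (-β * ‖v‖ ^ 2) = (3/2) * π ^ ((3:ℝ)/2) * β ^ (-(5:ℝ)/2) := by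
  set c : ℝ := 3 * (volume (Metric.ball (0:E3) 1)).toReal with hc
  have h1 : c * (β ^ (-(3:ℝ)/2) * (1/2) * Gamma (3/2)) = π ^ ((3:ℝ)/2) * β ^ (-(3:ℝ)/2) := by
    rw [← ioi_int2 β hβ, ← polar (fun y => exp (-β * y ^ 2)), gauss_int β hβ]
  have h2 : ∫ v : E3, ‖v‖ ^ 2 * exp (-β * ‖v‖ ^ 2)
      = c * (β ^ (-(5:ℝ)/2) * (1/2) * ((3/2) * Gamma (3/2))) := by
    rw [← ioi_int4 β hβ, ← polar (fun y => y ^ 2 * exp (-β * y ^ 2))]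
  have hββ : β ^ (-(3:ℝ)/2) * β ^ ((3:ℝ)/2) = 1 := by
    rw [← Real.rpow_add hβ]; norm_num
  have h3 : c * ((1/2) * Gamma (3/2)) = π ^ ((3:ℝ)/2) := by
    linear_combination β ^ ((3:ℝ)/2) * h1 - (c * (1/2 * Gamma (3/2)) - π ^ ((3:ℝ)/2)) * hββ
  rw [h2]; linear_combination (3/2) * β ^ (-(5:ℝ)/2) * h3


lemma gauss_integrable (β : ℝ) (hβ : 0 < β) : Integrable fun v : E3 => exp (-β * ‖v‖ ^ 2) := by
  have := (GaussianFourier.integrable_cexp_neg_mul_sq_norm_add (V := E3) (b := (β:ℂ))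
    (by simpa using hβ) 0 0).re
  refine this.congr (Filter.Eventually.of_forall fun v => ?_)
  show (Complex.exp _).re = _
  rw [show (-(β:ℂ) * (‖v‖:ℂ) ^ 2 + 0 * ((inner ℝ (0:E3) v : ℝ) : ℂ)) = ((-(β * ‖v‖^2) : ℝ) : ℂ) by
    push_cast; ring, ← Complex.ofReal_exp, Complex.ofReal_re]
  ring_nf

lemma gauss_integrable2 (β : ℝ) (hβ : 0 < β) :
    Integrable fun v : E3 => ‖v‖ ^ 2 * exp (-β * ‖v‖ ^ 2) := by
  have hcont : Continuous fun v : E3 => ‖v‖ ^ 2 * exp (-β * ‖v‖ ^ 2) := by fun_prop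
  refine Integrable.mono' ((gauss_integrable (β/2) (by linarith)).const_mul (2/β))
    hcont.aestronglyMeasurable (Filter.Eventually.of_forall fun v => ?_)
  set s := ‖v‖ ^ 2 with hs
  have hs0 : 0 ≤ s := by positivity
  have key : s * exp (-(β/2) * s) ≤ 2/β := by
    have h1 : (β/2) * s + 1 ≤ exp ((β/2) * s) := Real.add_one_le_exp _
    have h2 : 0 < exp ((β/2) * s) := exp_pos _
    have h4 : s ≤ (2/β) * exp ((β/2) * s) := by
      have : (2/β) * ((β/2) * s + 1) ≤ (2/β) * exp ((β/2) * s) :=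
        mul_le_mul_of_nonneg_left h1 (by positivity)
      have hid : (2/β) * ((β/2) * s + 1) = s + 2/β := by field_simp
      have hb2 : (0:ℝ) < 2/β := by positivity
      linarith
    rw [show (-(β/2) * s) = -((β/2) * s) by ring, Real.exp_neg, mul_inv_le_iff₀ h2]
    linarith [h4]
  have : ‖s * exp (-β * s)‖ = (s * exp (-(β/2) * s)) * exp (-(β/2) * s) := by
    rw [Real.norm_of_nonneg (by positivity), show (-β * s) = (-(β/2) * s) + (-(β/2) * s) by ring,
      Real.exp_add]; ring
  rw [this]
  calc (s * exp (-(β/2) * s)) * exp (-(β/2) * s) ≤ (2/β) * exp (-(β/2) * s) :=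
        mul_le_mul_of_nonneg_right key (exp_pos _).le
    _ = 2/β * exp (-(β/2) * ‖v‖ ^ 2) := by rw [hs]

/-- abstract two-sided bound -/
lemma fd_bounds (ε a b : ℝ) (hε : 0 < ε) (ha : 0 < a) (hb : 0 < b)
    (w : E3 → ℝ) (hw_cont : Continuous w) (hw_nonneg : ∀ v, 0 ≤ w v)
    (I d : ℝ) (hI : 0 < I) (hd : 0 < d)
    (hint1 : Integrable fun v => w v * Mw a b v)
    (hint2 : Integrable fun v => w v * Mw a b v ^ 2)
    (hIw : (∫ v, w v * Mw a b v) = I)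
    (hI2w : (∫ v, w v * Mw a b v ^ 2) = d * I) :
    I / (1 + ε * d) ≤ (∫ v, w v * FD ε a b v) ∧ (∫ v, w v * FD ε a b v) ≤ I := by
  have hM : ∀ v, 0 < Mw a b v := fun v => by unfold Mw; positivity
  have hden : ∀ v, 0 < 1 + ε * Mw a b v := fun v => by nlinarith [hM v]
  have hMcont : Continuous (Mw a b) := by unfold Mw; fun_prop
  have hFDcont : Continuous (FD ε a b) :=
    hMcont.div (by fun_prop) fun v => (hden v).ne'
  have hFDnn : ∀ v, 0 ≤ FD ε a b v := fun v => div_nonneg (hM v).le (hden v).le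
  have hFDle : ∀ v, FD ε a b v ≤ Mw a b v := fun v =>
    div_le_self (hM v).le (by nlinarith [hM v])
  have hintFD : Integrable fun v => w v * FD ε a b v := by
    refine Integrable.mono' hint1 (hw_cont.mul hFDcont).aestronglyMeasurable
      (Filter.Eventually.of_forall fun v => ?_)
    rw [Real.norm_of_nonneg (mul_nonneg (hw_nonneg v) (hFDnn v))]
    exact mul_le_mul_of_nonneg_left (hFDle v) (hw_nonneg v)
  constructor
  · -- lower bound
    set c : ℝ := 1 + ε * d with hc
    have hc0 : 0 < c := by nlinarith
    have e0 : Integrable (fun v => (2/c) * (w v * Mw a b v)) volume := hint1.const_mul _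
    have e1 : Integrable
        (fun v => (1/c^2) * (w v * Mw a b v + ε * (w v * Mw a b v ^ 2))) volume :=
      (hint1.add (hint2.const_mul ε)).const_mul _
    have hgint : Integrable (fun v =>
        (2/c) * (w v * Mw a b v) - (1/c^2) * (w v * Mw a b v + ε * (w v * Mw a b v ^ 2)))
        volume := e0.sub e1
    have hgval : (∫ v, (2/c) * (w v * Mw a b v)
        - (1/c^2) * (w v * Mw a b v + ε * (w v * Mw a b v ^ 2))) = I / c := by
      rw [integral_sub e0 e1, integral_const_mul, integral_const_mul,
        integral_add hint1 (hint2.const_mul ε), integral_const_mul, hIw, hI2w]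
      field_simp
      ring
    have hmono : (∫ v, (2/c) * (w v * Mw a b v)
        - (1/c^2) * (w v * Mw a b v + ε * (w v * Mw a b v ^ 2)))
        ≤ ∫ v, w v * FD ε a b v := by
      refine integral_mono hgint hintFD fun v => ?_
      have hx := hM v
      have hy := hden v
      have key : (2/c) * Mw a b v - (1/c^2) * (Mw a b v + ε * Mw a b v ^ 2)
          ≤ FD ε a b v := by
        rw [← sub_nonneg]
        have hrw : FD ε a b v - ((2/c) * Mw a b v - (1/c^2) * (Mw a b v + ε * Mw a b v ^ 2))
            = Mw a b v * ((1 + ε * Mw a b v) - c)^2 / ((1 + ε * Mw a b v) * c^2) := by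
          unfold FD
          field_simp
          ring
        rw [hrw]
        positivity
      calc (2/c) * (w v * Mw a b v) - (1/c^2) * (w v * Mw a b v + ε * (w v * Mw a b v ^ 2))
          = w v * ((2/c) * Mw a b v - (1/c^2) * (Mw a b v + ε * Mw a b v ^ 2)) := by ring
        _ ≤ w v * FD ε a b v := mul_le_mul_of_nonneg_left key (hw_nonneg v)
    rw [← hgval]
    exact hmono
  · rw [← hIw]
    exact integral_mono hintFD hint1 fun v =>
      mul_le_mul_of_nonneg_left (hFDle v) (hw_nonneg v)

/-- Two-sided bounds for the parameters of the Fermi–Dirac statistics with mass `ρ`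
and energy `3ρE`:
`π^{3/2} a b^{-3/2}/(1+2^{-3/2}εa) ≤ ρ ≤ π^{3/2} a b^{-3/2}` and
`π^{3/2} a b^{-5/2}/(1+2^{-5/2}εa) ≤ 2ρE ≤ π^{3/2} a b^{-5/2}`. -/
theorem stmt15 (ε a b ρ E : ℝ) (hε : 0 < ε) (ha : 0 < a) (hb : 0 < b)
    (hρ : 0 < ρ) (hE : 0 < E)
    (hmass : (∫ v, FD ε a b v) = ρ)
    (henergy : (∫ v, ‖v‖ ^ 2 * FD ε a b v) = 3 * ρ * E) :
    (π ^ ((3 : ℝ) / 2) * a * b ^ (-(3 : ℝ) / 2) / (1 + 2 ^ (-(3 : ℝ) / 2) * ε * a) ≤ ρ ∧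
      ρ ≤ π ^ ((3 : ℝ) / 2) * a * b ^ (-(3 : ℝ) / 2)) ∧
    (π ^ ((3 : ℝ) / 2) * a * b ^ (-(5 : ℝ) / 2) / (1 + 2 ^ (-(5 : ℝ) / 2) * ε * a) ≤
        2 * ρ * E ∧
      2 * ρ * E ≤ π ^ ((3 : ℝ) / 2) * a * b ^ (-(5 : ℝ) / 2)) := by
  have hsqM : ∀ v : E3, Mw a b v ^ 2 = a ^ 2 * exp (-(2*b) * ‖v‖ ^ 2) := by
    intro v
    unfold Mw
    rw [mul_pow, sq (exp (-b * ‖v‖ ^ 2)), ← Real.exp_add]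
    ring_nf
  have h2b : (0:ℝ) < 2 * b := by linarith
  constructor
  · -- mass bounds
    have hbd := fd_bounds ε a b hε ha hb (fun _ => (1:ℝ)) continuous_const (fun _ => zero_le_one)
      (a * (π ^ ((3:ℝ)/2) * b ^ (-(3:ℝ)/2))) (2 ^ (-(3:ℝ)/2) * a)
      (by positivity) (by positivity)
      (by simpa [Mw, one_mul] using (gauss_integrable b hb).const_mul a)
      (by
        refine ((gauss_integrable (2*b) h2b).const_mul (a^2)).congr
          (Filter.Eventually.of_forall fun v => ?_)
        show a ^ 2 * exp (-(2*b) * ‖v‖ ^ 2) = 1 * Mw a b v ^ 2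
        rw [one_mul, hsqM v])
      (by
        simp_rw [one_mul, Mw, integral_const_mul, gauss_int b hb])
      (by
        simp_rw [one_mul, hsqM, integral_const_mul, gauss_int (2*b) h2b,
          Real.mul_rpow (by norm_num : (0:ℝ) ≤ 2) hb.le]
        ring)
    have hval : (∫ v, (fun _ => (1:ℝ)) v * FD ε a b v) = ρ := by simpa using hmass
    rw [hval] at hbd
    constructor
    · refine le_trans (le_of_eq ?_) hbd.1
      rw [show (1 + 2 ^ (-(3:ℝ)/2) * ε * a) = 1 + ε * (2 ^ (-(3:ℝ)/2) * a) by ring]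
      ring_nf
    · refine hbd.2.trans (le_of_eq ?_)
      ring
  · -- energy bounds
    have hbd := fd_bounds ε a b hε ha hb (fun v => ‖v‖ ^ 2) (by fun_prop)
      (fun v => by positivity)
      ((3/2) * (a * (π ^ ((3:ℝ)/2) * b ^ (-(5:ℝ)/2)))) (2 ^ (-(5:ℝ)/2) * a)
      (by positivity) (by positivity)
      (by
        refine ((gauss_integrable2 b hb).const_mul a).congr
          (Filter.Eventually.of_forall fun v => ?_)
        show a * (‖v‖ ^ 2 * exp (-b * ‖v‖ ^ 2)) = ‖v‖ ^ 2 * Mw a b v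
        unfold Mw; ring)
      (by
        refine ((gauss_integrable2 (2*b) h2b).const_mul (a^2)).congr
          (Filter.Eventually.of_forall fun v => ?_)
        show a ^ 2 * (‖v‖ ^ 2 * exp (-(2*b) * ‖v‖ ^ 2)) = ‖v‖ ^ 2 * Mw a b v ^ 2
        rw [hsqM v]; ring)
      (by
        have : ∀ v : E3, ‖v‖ ^ 2 * Mw a b v = a * (‖v‖ ^ 2 * exp (-b * ‖v‖ ^ 2)) := by
          intro v; unfold Mw; ring
        simp_rw [this, integral_const_mul, gauss_int2 b hb]
        ring)
      (by
        have : ∀ v : E3, ‖v‖ ^ 2 * Mw a b v ^ 2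
            = a ^ 2 * (‖v‖ ^ 2 * exp (-(2*b) * ‖v‖ ^ 2)) := by
          intro v; rw [hsqM v]; ring
        simp_rw [this, integral_const_mul, gauss_int2 (2*b) h2b,
          Real.mul_rpow (by norm_num : (0:ℝ) ≤ 2) hb.le]
        ring)
    rw [henergy] at hbd
    have hD : (0:ℝ) < 1 + ε * (2 ^ (-(5:ℝ)/2) * a) := by positivity
    constructor
    · have h1 := hbd.1
      have hkey : π ^ ((3:ℝ)/2) * a * b ^ (-(5:ℝ)/2) / (1 + 2 ^ (-(5:ℝ)/2) * ε * a)
          = (2/3) * ((3/2) * (a * (π ^ ((3:ℝ)/2) * b ^ (-(5:ℝ)/2))) / (1 + ε * (2 ^ (-(5:ℝ)/2) * a))) := by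
        rw [show (1 + 2 ^ (-(5:ℝ)/2) * ε * a) = 1 + ε * (2 ^ (-(5:ℝ)/2) * a) by ring]
        field_simp
      rw [hkey]
      linarith
    · have h2 := hbd.2
      have : π ^ ((3:ℝ)/2) * a * b ^ (-(5:ℝ)/2)
          = (2/3) * ((3/2) * (a * (π ^ ((3:ℝ)/2) * b ^ (-(5:ℝ)/2)))) := by ring
      rw [this]
      linarith

end
end
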